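/- Assume there exists θ > 0 such that a⁺(x) ≤ θ a⁻(x) for a.e. x ∈ ℝ^d. (i) For every ρ₀ ∈ C_b(ℝ^d) with ρ₀ ≥ 0 there exists b > 0 such that 0 ≤ ρ_t(x) ≤ b for all t ≥ 0 and all x ∈ ℝ^d. (ii) If moreover 0 ≤ ρ₀(x) ≤ θ − δ for all x and some δ > 0, then 0 ≤ ρ_t(x) ≤ θ for all t > 0 and all x ∈ ℝ^d. -/

import Mathlib

open MeasureTheory Filter Set Topology
open scoped ENNReal

noncomputable section

abbrev Rd (d : ℕ) := Fin d → ℝ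

/-- the convolution `(a ∗ ρ)(x) = ∫ a(x−y) ρ(y) dy` -/
def conv {d : ℕ} (a ρ : Rd d → ℝ) (x : Rd d) : ℝ := ∫ y : Rd d, a (x - y) * ρ y

/-- the right-hand side of the kinetic equation:
`−m ρ − (a⁻ ∗ ρ) ρ + (a⁺ ∗ ρ)`. -/
def KRHS {d : ℕ} (m : ℝ) (ap am : Rd d → ℝ) (ρ : Rd d → ℝ) : Rd d → ℝ :=
  fun x => -m * ρ x - conv am ρ x * ρ x + conv ap ρ x

/-- classical solution of the kinetic equation on the time set `I`, continuously
differentiable with respect to the `L∞`-norm. -/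
structure KinSol {d : ℕ} (m : ℝ) (ap am : Rd d → ℝ) (I : Set ℝ)
    (ρ0 : Rd d → ℝ) (ρ : ℝ → Rd d → ℝ) : Prop where
  init : ρ 0 =ᵐ[volume] ρ0
  meas : ∀ t ∈ I, AEStronglyMeasurable (ρ t) volume
  bdd : ∀ t ∈ I, eLpNorm (ρ t) ⊤ volume < ⊤
  hasDeriv : ∀ t ∈ I,
    Tendsto (fun h : ℝ =>
        eLpNorm (ρ (t + h) - ρ t - h • KRHS m ap am (ρ t)) ⊤ volume /
          ENNReal.ofReal |h|)
      (𝓝[{h : ℝ | h ≠ 0 ∧ t + h ∈ I}] 0) (𝓝 0)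
  contDeriv : ∀ t ∈ I,
    Tendsto (fun s : ℝ =>
        eLpNorm (KRHS m ap am (ρ s) - KRHS m ap am (ρ t)) ⊤ volume)
      (𝓝[I] t) (𝓝 0)


lemma KS.le_all_of_ae_le {d : ℕ} {f : Rd d → ℝ} (hf : Continuous f) {B : ℝ}
    (h : ∀ᵐ x ∂(volume : Measure (Rd d)), f x ≤ B) : ∀ x, f x ≤ B := by
  by_contra hc
  push_neg at hc
  obtain ⟨x, hx⟩ := hc
  have hopen : IsOpen {y : Rd d | B < f y} := isOpen_lt continuous_const hf
  have hpos : 0 < volume {y : Rd d | B < f y} := hopen.measure_pos volume ⟨x, hx⟩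
  have h0 : volume {y : Rd d | ¬ f y ≤ B} = 0 := ae_iff.mp h
  simp only [not_le] at h0
  exact hpos.ne' h0

lemma KS.ae_abs_le_toReal {d : ℕ} {f : Rd d → ℝ} (hb : eLpNorm f ⊤ (volume : Measure (Rd d)) < ⊤) :
    ∀ᵐ x ∂(volume : Measure (Rd d)), |f x| ≤ (eLpNorm f ⊤ volume).toReal := by
  rw [eLpNorm_exponent_top] at hb ⊢
  filter_upwards [ae_le_eLpNormEssSup (f := f) (μ := (volume : Measure (Rd d)))] with x hx
  have := ENNReal.toReal_mono hb.ne hx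
  simpa [Real.norm_eq_abs] using this

lemma KS.toReal_eLpNorm_le {d : ℕ} {f : Rd d → ℝ} {B : ℝ} (hB : 0 ≤ B)
    (h : ∀ᵐ x ∂(volume : Measure (Rd d)), ‖f x‖ ≤ B) :
    (eLpNorm f ⊤ (volume : Measure (Rd d))).toReal ≤ B := by
  rw [eLpNorm_exponent_top]
  exact ENNReal.toReal_le_of_le_ofReal hB (eLpNormEssSup_le_of_ae_bound h)

-- translation of a.e. property
lemma KS.ae_sub_left {d : ℕ} {P : Rd d → Prop} (h : ∀ᵐ z ∂(volume : Measure (Rd d)), P z)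
    (x : Rd d) : ∀ᵐ y ∂(volume : Measure (Rd d)), P (x - y) := by
  rw [show (∀ᵐ y ∂(volume : Measure (Rd d)), P (x - y)) ↔ _ from Filter.eventually_map.symm,
    Measure.map_sub_left_ae volume x]
  exact h

lemma KS.integrable_shift {d : ℕ} {a : Rd d → ℝ} (ha : Integrable a (volume : Measure (Rd d)))
    (x : Rd d) : Integrable (fun y => a (x - y)) (volume : Measure (Rd d)) :=
  (integrable_comp_sub_left a x).mpr ha

lemma KS.integrable_conv_arg {d : ℕ} {a f : Rd d → ℝ} (ha : Integrable a (volume : Measure (Rd d)))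
    (hf : AEStronglyMeasurable f (volume : Measure (Rd d))) {U : ℝ} (hfU : ∀ x, |f x| ≤ U)
    (x : Rd d) : Integrable (fun y => a (x - y) * f y) (volume : Measure (Rd d)) := by
  have h1 : Integrable (fun y => f y * a (x - y)) (volume : Measure (Rd d)) :=
    Integrable.bdd_mul (c := U) (KS.integrable_shift ha x) hf
      (Filter.Eventually.of_forall fun y => by simpa [Real.norm_eq_abs] using hfU y)
  simpa [mul_comm] using h1

lemma KS.conv_nonneg {d : ℕ} {a f : Rd d → ℝ}
    (hapos : ∀ᵐ z ∂(volume : Measure (Rd d)), 0 ≤ a z) (hfpos : ∀ y, 0 ≤ f y) (x : Rd d) :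
    0 ≤ conv a f x := by
  refine integral_nonneg_of_ae ?_
  filter_upwards [KS.ae_sub_left hapos x] with y hy
  exact mul_nonneg hy (hfpos y)

lemma KS.conv_le_dom {d : ℕ} {a b f : Rd d → ℝ} {θ : ℝ}
    (ha : Integrable a (volume : Measure (Rd d))) (hb : Integrable b (volume : Measure (Rd d)))
    (hdom : ∀ᵐ z ∂(volume : Measure (Rd d)), a z ≤ θ * b z)
    (hf : AEStronglyMeasurable f (volume : Measure (Rd d)))
    (hfpos : ∀ y, 0 ≤ f y) {U : ℝ} (hfU : ∀ y, f y ≤ U) (x : Rd d) :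
    conv a f x ≤ θ * conv b f x := by
  have habs : ∀ y, |f y| ≤ U := fun y => by rw [abs_of_nonneg (hfpos y)]; exact hfU y
  have h1 : Integrable (fun y => a (x - y) * f y) _ := KS.integrable_conv_arg ha hf habs x
  have h2 : Integrable (fun y => b (x - y) * f y) _ := KS.integrable_conv_arg hb hf habs x
  have : conv a f x ≤ ∫ y, θ * (b (x - y) * f y) := by
    rw [conv]
    refine integral_mono_ae h1 (h2.const_mul θ) ?_
    filter_upwards [KS.ae_sub_left hdom x] with y hy
    calc a (x - y) * f y ≤ (θ * b (x - y)) * f y :=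
          mul_le_mul_of_nonneg_right hy (hfpos y)
      _ = θ * (b (x - y) * f y) := by ring
  rwa [integral_const_mul, ← conv] at this

lemma KS.abs_conv_le {d : ℕ} {a f : Rd d → ℝ}
    (ha : Integrable a (volume : Measure (Rd d)))
    (hf : AEStronglyMeasurable f (volume : Measure (Rd d)))
    {U : ℝ} (hU : 0 ≤ U) (hfU : ∀ y, |f y| ≤ U) (x : Rd d) :
    |conv a f x| ≤ (∫ z, |a z|) * U := by
  have h1 : Integrable (fun y => a (x - y) * f y) _ := KS.integrable_conv_arg ha hf hfU x
  have h2 : Integrable (fun y => |a (x - y)|) _ := (KS.integrable_shift ha x).abs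
  calc |conv a f x| ≤ ∫ y, |a (x - y) * f y| := by
        rw [conv]
        simpa only [Real.norm_eq_abs] using
          norm_integral_le_integral_norm (μ := (volume : Measure (Rd d))) (fun y => a (x - y) * f y)
    _ ≤ ∫ y, |a (x - y)| * U := by
        refine integral_mono h1.abs (h2.mul_const U) fun y => ?_
        rw [abs_mul]
        exact mul_le_mul_of_nonneg_left (hfU y) (abs_nonneg _)
    _ = (∫ y, |a (x - y)|) * U := by rw [integral_mul_const]
    _ = (∫ z, |a z|) * U := by rw [integral_sub_left_eq_self (fun z => |a z|) volume x]

set_option maxHeartbeats 3200000 in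
theorem statement12
    (d : ℕ) (hd : 1 ≤ d) (m : ℝ) (hm : 0 ≤ m)
    (aplus aminus : Rd d → ℝ)
    (hap_int : Integrable aplus volume) (ham_int : Integrable aminus volume)
    (hap_bdd : eLpNorm aplus ⊤ volume < ⊤) (ham_bdd : eLpNorm aminus ⊤ volume < ⊤)
    (hap_even : ∀ᵐ x ∂volume, aplus (-x) = aplus x)
    (ham_even : ∀ᵐ x ∂volume, aminus (-x) = aminus x)
    (hap_pos : ∀ᵐ x ∂volume, 0 ≤ aplus x)
    (ham_pos : ∀ᵐ x ∂volume, 0 ≤ aminus x)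
    (θ : ℝ) (hθ : 0 < θ)
    (hdom : ∀ᵐ x ∂volume, aplus x ≤ θ * aminus x)
    (ρ0 : Rd d → ℝ) (hρ0_cont : Continuous ρ0)
    (hρ0_bdd : ∃ M : ℝ, ∀ x, ρ0 x ≤ M)
    (hρ0_pos : ∀ x, 0 ≤ ρ0 x)
    (ρ : ℝ → Rd d → ℝ)
    (hsol : KinSol m aplus aminus (Set.Ici 0) ρ0 ρ)
    (hρ_init : ρ 0 = ρ0)
    (hρ_cont : ∀ t ∈ Set.Ici (0 : ℝ), Continuous (ρ t))
    (hρ_pos : ∀ t ∈ Set.Ici (0 : ℝ), ∀ x, 0 ≤ ρ t x)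
 :
    (∃ b > (0 : ℝ), ∀ t ∈ Set.Ici (0 : ℝ), ∀ x, ρ t x ≤ b) ∧
      ∀ δ > (0 : ℝ), (∀ x, ρ0 x ≤ θ - δ) →
        ∀ t, 0 < t → ∀ x, ρ t x ≤ θ := by
  classical
  obtain ⟨M0, hM0⟩ := hρ0_bdd
  have hM00 : 0 ≤ M0 := le_trans (hρ0_pos (fun _ => 0)) (hM0 (fun _ => 0))
  obtain ⟨Cm, hCmdef⟩ : ∃ Cm : ℝ, Cm = ∫ z, |aminus z| := ⟨_, rfl⟩
  obtain ⟨Cp, hCpdef⟩ : ∃ Cp : ℝ, Cp = ∫ z, |aplus z| := ⟨_, rfl⟩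
  have hCm0 : 0 ≤ Cm := by rw [hCmdef]; exact integral_nonneg fun z => abs_nonneg _
  have hCp0 : 0 ≤ Cp := by rw [hCpdef]; exact integral_nonneg fun z => abs_nonneg _
  obtain ⟨u, hudef⟩ : ∃ u : ℝ → ℝ, u = fun t => (eLpNorm (ρ t) ⊤ volume).toReal := ⟨_, rfl⟩
  have hu_nonneg : ∀ t, 0 ≤ u t := fun t => by rw [hudef]; exact ENNReal.toReal_nonneg
  have hub : ∀ t ∈ Set.Ici (0:ℝ), ∀ x, ρ t x ≤ u t := by
    intro t ht
    rw [hudef]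
    refine KS.le_all_of_ae_le (hρ_cont t ht) ?_
    filter_upwards [KS.ae_abs_le_toReal (hsol.bdd t ht)] with x hx
    exact (le_abs_self _).trans hx
  have habs : ∀ t ∈ Set.Ici (0:ℝ), ∀ x, |ρ t x| ≤ u t := fun t ht x => by
    rw [abs_of_nonneg (hρ_pos t ht x)]; exact hub t ht x
  -- pointwise bounds on KRHS
  have hA0 : ∀ t ∈ Set.Ici (0:ℝ), ∀ x, 0 ≤ conv aminus (ρ t) x :=
    fun t ht x => KS.conv_nonneg ham_pos (hρ_pos t ht) x
  have hAle : ∀ t ∈ Set.Ici (0:ℝ), ∀ x, conv aminus (ρ t) x ≤ Cm * u t := by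
    intro t ht x
    rw [hCmdef]
    exact le_trans (le_abs_self _)
      (KS.abs_conv_le ham_int (hsol.meas t ht) (hu_nonneg t) (habs t ht) x)
  have hPabs : ∀ t ∈ Set.Ici (0:ℝ), ∀ x, |conv aplus (ρ t) x| ≤ Cp * u t := by
    intro t ht x
    rw [hCpdef]
    exact KS.abs_conv_le hap_int (hsol.meas t ht) (hu_nonneg t) (habs t ht) x
  have hKle : ∀ t ∈ Set.Ici (0:ℝ), ∀ x, KRHS m aplus aminus (ρ t) x
      ≤ conv aminus (ρ t) x * (θ - ρ t x) := by
    intro t ht x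
    have hP := KS.conv_le_dom hap_int ham_int hdom (hsol.meas t ht) (hρ_pos t ht) (hub t ht) x
    have hmf : 0 ≤ m * ρ t x := mul_nonneg hm (hρ_pos t ht x)
    simp only [KRHS]
    nlinarith
  have hKabs : ∀ t ∈ Set.Ici (0:ℝ), ∀ x, |KRHS m aplus aminus (ρ t) x|
      ≤ m * u t + Cm * u t * u t + Cp * u t := by
    intro t ht x
    have h1 := hρ_pos t ht x
    have h2 := hub t ht x
    have h3 := hA0 t ht x
    have h4 := hAle t ht x
    have h5 := abs_le.1 (hPabs t ht x)
    have h6 : conv aminus (ρ t) x * ρ t x ≤ Cm * u t * u t :=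
      mul_le_mul h4 h2 h1 (mul_nonneg hCm0 (hu_nonneg t))
    have h7 : 0 ≤ conv aminus (ρ t) x * ρ t x := mul_nonneg h3 h1
    have h8 : m * ρ t x ≤ m * u t := mul_le_mul_of_nonneg_left h2 hm
    have h9 : 0 ≤ m * ρ t x := mul_nonneg hm h1
    have hCmU : 0 ≤ Cm * u t * u t := mul_nonneg (mul_nonneg hCm0 (hu_nonneg t)) (hu_nonneg t)
    have hCpU : 0 ≤ Cp * u t := mul_nonneg hCp0 (hu_nonneg t)
    simp only [KRHS]
    rw [abs_le]
    constructor <;> linarith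
  -- quantitative derivative estimate
  have hder : ∀ t ∈ Set.Ici (0:ℝ), ∀ ε > (0:ℝ), ∃ r > (0:ℝ), ∀ h : ℝ, h ≠ 0 → 0 ≤ t + h →
      |h| < r →
      eLpNorm (ρ (t + h) - ρ t - h • KRHS m aplus aminus (ρ t)) ⊤ volume
        ≤ ENNReal.ofReal (ε * |h|) := by
    intro t ht ε hε
    have htd := hsol.hasDeriv t ht
    have hev := htd (Iio_mem_nhds (ENNReal.ofReal_pos.2 hε))
    rw [mem_map, mem_nhdsWithin_iff_eventually] at hev
    rw [Metric.eventually_nhds_iff] at hev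
    obtain ⟨r, hr, hball⟩ := hev
    refine ⟨r, hr, fun h hne hth hhr => ?_⟩
    have hmem := hball (y := h) (by rwa [Real.dist_eq, sub_zero]) ⟨hne, hth⟩
    have h0 : (ENNReal.ofReal |h| : ℝ≥0∞) ≠ 0 :=
      ne_of_gt (ENNReal.ofReal_pos.2 (abs_pos.2 hne))
    have hlt := (ENNReal.div_lt_iff (Or.inl h0) (Or.inl ENNReal.ofReal_ne_top)).mp hmem
    rw [ENNReal.ofReal_mul hε.le]
    exact hlt.le
  have hrem_ae : ∀ (g : Rd d → ℝ) (C : ℝ), 0 ≤ C →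
      eLpNorm g ⊤ volume ≤ ENNReal.ofReal C →
      ∀ᵐ x ∂(volume : Measure (Rd d)), |g x| ≤ C := by
    intro g C hC hle
    rw [eLpNorm_exponent_top] at hle
    filter_upwards [ae_le_eLpNormEssSup (f := g) (μ := (volume : Measure (Rd d)))] with x hx
    have h2 : (ENNReal.ofReal ‖g x‖) ≤ ENNReal.ofReal C := by
      rw [ofReal_norm]; exact le_trans hx hle
    rwa [ENNReal.ofReal_le_ofReal_iff hC, Real.norm_eq_abs] at h2
  -- one-sided step estimate
  have hstep : ∀ t ∈ Set.Ici (0:ℝ), ∀ ε > (0:ℝ), ∃ r > (0:ℝ), ∀ h : ℝ, 0 < h → h < r →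
      u (t + h) ≤ max (u t) θ + ε * h := by
    intro t ht ε hε
    obtain ⟨r₁, hr₁, hr⟩ := hder t ht ε hε
    have hden : (0:ℝ) < Cm * u t + 1 := by
      have := mul_nonneg hCm0 (hu_nonneg t); linarith
    refine ⟨min r₁ (1 / (Cm * u t + 1)), lt_min hr₁ (one_div_pos.2 hden), fun h hh0 hhr => ?_⟩
    have ht0 : (0:ℝ) ≤ t := ht
    have hhr₁ : |h| < r₁ := by
      rw [abs_of_pos hh0]; exact hhr.trans_le (min_le_left _ _)
    have hth : (0:ℝ) ≤ t + h := by linarith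
    have hth' : t + h ∈ Set.Ici (0:ℝ) := hth
    have hrem := hrem_ae (ρ (t + h) - ρ t - h • KRHS m aplus aminus (ρ t)) (ε * h)
        (by positivity)
        (by simpa [abs_of_pos hh0] using hr h (ne_of_gt hh0) hth hhr₁)
    have hBpos : (0:ℝ) ≤ max (u t) θ + ε * h := by
      have h1 : (0:ℝ) ≤ ε * h := by positivity
      have h2 : θ ≤ max (u t) θ := le_max_right _ _
      linarith
    have hae : ∀ᵐ x ∂(volume : Measure (Rd d)), ‖ρ (t + h) x‖ ≤ max (u t) θ + ε * h := by
      filter_upwards [hrem] with x hx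
      have hid : ρ (t + h) x = ρ t x + h * KRHS m aplus aminus (ρ t) x
          + (ρ (t + h) - ρ t - h • KRHS m aplus aminus (ρ t)) x := by
        simp only [Pi.sub_apply, Pi.smul_apply, smul_eq_mul]; ring
      have hK := hKle t ht x
      have hA0' := hA0 t ht x
      have hAle' := hAle t ht x
      have hfx0 := hρ_pos t ht x
      have hfxU := hub t ht x
      have hhA : h * conv aminus (ρ t) x ≤ 1 := by
        have h1 : h ≤ 1 / (Cm * u t + 1) := (hhr.trans_le (min_le_right _ _)).le
        calc h * conv aminus (ρ t) x ≤ (1 / (Cm * u t + 1)) * (Cm * u t) :=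
              mul_le_mul h1 hAle' hA0' (one_div_pos.2 hden).le
          _ = (Cm * u t) / (Cm * u t + 1) := by ring
          _ ≤ 1 := by
              rw [div_le_one hden]; linarith
      have hkey : ρ t x + h * (conv aminus (ρ t) x * (θ - ρ t x)) ≤ max (u t) θ := by
        rcases le_total (ρ t x) θ with hc | hc
        · refine le_trans ?_ (le_max_right _ _)
          nlinarith [mul_nonneg (sub_nonneg.2 hc) (sub_nonneg.2 hhA)]
        · refine le_trans ?_ (le_max_left _ _)
          nlinarith [mul_nonneg hh0.le (mul_nonneg hA0' (sub_nonneg.2 hc))]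
      have hKmul : h * KRHS m aplus aminus (ρ t) x
          ≤ h * (conv aminus (ρ t) x * (θ - ρ t x)) :=
        mul_le_mul_of_nonneg_left hK hh0.le
      rw [Real.norm_eq_abs, abs_of_nonneg (hρ_pos (t + h) hth' x), hid]
      have hrx := (abs_le.1 hx).2
      linarith
    rw [hudef] at hBpos hae ⊢
    exact KS.toReal_eLpNorm_le hBpos hae
  -- left continuity estimate
  have hleft : ∀ t : ℝ, 0 < t → ∃ c ≥ (0:ℝ), ∃ r > (0:ℝ), ∀ s, 0 ≤ s → s < t → t - s < r →
      u t ≤ u s + c * (t - s) := by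
    intro t ht
    have ht' : t ∈ Set.Ici (0:ℝ) := ht.le
    obtain ⟨r, hr, hd'⟩ := hder t ht' 1 one_pos
    set K0 : ℝ := m * u t + Cm * u t * u t + Cp * u t with hK0def
    have hK00 : 0 ≤ K0 := by
      have h1 := mul_nonneg hm (hu_nonneg t)
      have h2 := mul_nonneg (mul_nonneg hCm0 (hu_nonneg t)) (hu_nonneg t)
      have h3 := mul_nonneg hCp0 (hu_nonneg t)
      rw [hK0def]; linarith
    refine ⟨1 + K0, by linarith, r, hr, fun s hs0 hst hsr => ?_⟩
    have hne : s - t ≠ 0 := fun hc => absurd (sub_eq_zero.1 hc) (ne_of_lt hst)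
    have habsh : |s - t| = t - s := by rw [abs_of_neg (by linarith)]; ring
    have hts : t + (s - t) = s := by ring
    have hrem := hrem_ae (ρ (t + (s - t)) - ρ t - (s - t) • KRHS m aplus aminus (ρ t))
        ((1:ℝ) * |s - t|) (by positivity)
        (hd' (s - t) hne (by rw [hts]; exact hs0) (by rw [habsh]; exact hsr))
    have hBpos : (0:ℝ) ≤ u s + (1 + K0) * (t - s) := by
      have h1 : (0:ℝ) ≤ (1 + K0) * (t - s) := mul_nonneg (by linarith) (by linarith)
      linarith [hu_nonneg s]
    have hae : ∀ᵐ x ∂(volume : Measure (Rd d)), ‖ρ t x‖ ≤ u s + (1 + K0) * (t - s) := by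
      filter_upwards [hrem] with x hx
      have hid : ρ t x = ρ (t + (s - t)) x - (s - t) * KRHS m aplus aminus (ρ t) x
          - (ρ (t + (s - t)) - ρ t - (s - t) • KRHS m aplus aminus (ρ t)) x := by
        simp only [Pi.sub_apply, Pi.smul_apply, smul_eq_mul]; ring
      have hKb := abs_le.1 (hKabs t ht' x)
      have hsU : ρ (t + (s - t)) x ≤ u s := by rw [hts]; exact hub s hs0 x
      have hrx := abs_le.1 hx
      rw [habsh, one_mul] at hrx
      have hprod : (t - s) * KRHS m aplus aminus (ρ t) x ≤ (t - s) * K0 :=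
        mul_le_mul_of_nonneg_left hKb.2 (by linarith)
      have hprod' : -((t - s) * K0) ≤ (t - s) * KRHS m aplus aminus (ρ t) x := by
        have h2 := mul_le_mul_of_nonneg_left hKb.1 (show (0:ℝ) ≤ t - s by linarith)
        rw [neg_mul_eq_mul_neg]; exact h2
      have hflip : (s - t) * KRHS m aplus aminus (ρ t) x
          = -((t - s) * KRHS m aplus aminus (ρ t) x) := by ring
      have hexp : (1 + K0) * (t - s) = (t - s) + (t - s) * K0 := by ring
      rw [Real.norm_eq_abs, abs_of_nonneg (hρ_pos t ht' x), hid]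
      linarith [hrx.1, hrx.2]
    rw [hudef] at hBpos hae ⊢
    exact KS.toReal_eLpNorm_le hBpos hae
  -- main a priori bound
  have hmain : ∀ t ∈ Set.Ici (0:ℝ), u t ≤ max (u 0) θ := by
    set M := max (u 0) θ with hMdef
    have hθM : θ ≤ M := le_max_right _ _
    have hu0M : u 0 ≤ M := le_max_left _ _
    have key : ∀ ε > (0:ℝ), ∀ t ∈ Set.Ici (0:ℝ), u t ≤ M + ε * t := by
      intro ε hε
      by_contra hcon
      push_neg at hcon
      obtain ⟨t₀, ht₀, ht₀'⟩ := hcon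
      set T := {t : ℝ | 0 ≤ t ∧ M + ε * t < u t} with hTdef
      have hTne : T.Nonempty := ⟨t₀, ht₀, ht₀'⟩
      have hTbdd : BddBelow T := ⟨0, fun t ht => ht.1⟩
      set c := sInf T with hcdef
      have hc0 : 0 ≤ c := le_csInf hTne fun t ht => ht.1
      have hgood : ∀ s, 0 ≤ s → s < c → u s ≤ M + ε * s := by
        intro s hs0 hsc
        by_contra hbad
        push_neg at hbad
        exact absurd (csInf_le hTbdd ⟨hs0, hbad⟩) (not_le.2 hsc)
      have hcT : u c ≤ M + ε * c := by
        rcases eq_or_lt_of_le hc0 with h0 | hpos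
        · rw [← h0]; simpa using hu0M
        · obtain ⟨cc, hcc0, r, hrpos, hL⟩ := hleft c hpos
          refine le_of_forall_pos_le_add fun η hη => ?_
          set w := min (min (r / 2) (c / 2)) (η / (cc + 1)) with hwdef
          have hw_pos : 0 < w := by positivity
          have hw1 : w ≤ r / 2 := (min_le_left _ _).trans (min_le_left _ _)
          have hw2 : w ≤ c / 2 := (min_le_left _ _).trans (min_le_right _ _)
          have hw3 : w ≤ η / (cc + 1) := min_le_right _ _
          have hs0 : 0 ≤ c - w := by linarith
          have hsc : c - w < c := by linarith
          have hcs : c - (c - w) < r := by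
            have : c - (c - w) = w := by ring
            rw [this]; linarith
          have hLs := hL (c - w) hs0 hsc hcs
          have hgs := hgood (c - w) hs0 hsc
          have hwη : cc * (c - (c - w)) ≤ η := by
            have h1 : c - (c - w) = w := by ring
            rw [h1]
            calc cc * w ≤ cc * (η / (cc + 1)) := mul_le_mul_of_nonneg_left hw3 hcc0
              _ = (cc / (cc + 1)) * η := by ring
              _ ≤ 1 * η := by
                  apply mul_le_mul_of_nonneg_right _ hη.le
                  rw [div_le_one (by linarith)]; linarith
              _ = η := one_mul η
          have hεs : ε * (c - w) ≤ ε * c := mul_le_mul_of_nonneg_left (by linarith) hε.le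
          linarith
      obtain ⟨r, hrpos, hst⟩ := hstep c hc0 (ε / 2) (by positivity)
      obtain ⟨t', ht'T, ht'lt⟩ := Real.lt_sInf_add_pos hTne hrpos
      rw [← hcdef] at ht'lt
      have hct' : c ≤ t' := csInf_le hTbdd ht'T
      rcases eq_or_lt_of_le hct' with heq | hlt
      · rw [← heq] at ht'T
        exact absurd hcT (not_le.2 ht'T.2)
      · have hh0 : 0 < t' - c := by linarith
        have hhr : t' - c < r := by linarith
        have hust := hst (t' - c) hh0 hhr
        have hch : c + (t' - c) = t' := by ring
        rw [hch] at hust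
        have hεc0 : 0 ≤ ε * c := mul_nonneg hε.le hc0
        have hmaxle : max (u c) θ ≤ M + ε * c := max_le hcT (by linarith)
        have hut' := ht'T.2
        have hexp : ε * t' = ε * c + ε * (t' - c) := by ring
        have hhalf : (ε / 2) * (t' - c) < ε * (t' - c) := by nlinarith
        linarith
    intro t ht
    refine le_of_forall_pos_le_add fun η hη => ?_
    have ht0 : (0:ℝ) ≤ t := ht
    have hk := key (η / (t + 1)) (by positivity) t ht
    have h2 : (η / (t + 1)) * t ≤ η := by
      rw [div_mul_eq_mul_div, div_le_iff₀ (by linarith)]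
      nlinarith
    linarith
  -- conclusion
  have hu0 : u 0 ≤ M0 := by
    rw [hudef]
    refine KS.toReal_eLpNorm_le hM00 ?_
    refine Filter.Eventually.of_forall fun x => ?_
    rw [hρ_init, Real.norm_eq_abs, abs_of_nonneg (hρ0_pos x)]
    exact hM0 x
  constructor
  · refine ⟨max M0 θ, lt_of_lt_of_le hθ (le_max_right _ _), fun t ht x => ?_⟩
    calc ρ t x ≤ u t := hub t ht x
      _ ≤ max (u 0) θ := hmain t ht
      _ ≤ max M0 θ := max_le_max hu0 le_rfl
  · intro δ hδ hinit t ht x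
    have hu0θ : u 0 ≤ θ := by
      rw [hudef]
      refine KS.toReal_eLpNorm_le hθ.le ?_
      refine Filter.Eventually.of_forall fun y => ?_
      rw [hρ_init, Real.norm_eq_abs, abs_of_nonneg (hρ0_pos y)]
      linarith [hinit y]
    calc ρ t x ≤ u t := hub t ht.le x
      _ ≤ max (u 0) θ := hmain t ht.le
      _ = θ := max_eq_right hu0θ
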